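/- For every prime p ≡ 1 (mod 4), (1/4)_{(p-1)/2} = (p/4) · Γ_p(-1/4 + p/2) / Γ_p(1/4), where all quantities are in Q_p. -/

import Mathlib

open Polynomial Finset

/-- Rising Pochhammer symbol over ℚ. -/
noncomputable def poch (x : ℚ) (n : ℕ) : ℚ := (ascPochhammer ℚ n).eval x

open Filter

private lemma ascPoch_prod {S : Type*} [CommSemiring S] (x : S) (n : ℕ) :
    (ascPochhammer S n).eval x = ∏ i ∈ Finset.range n, (x + i) := by
  induction n with
  | zero => simp
  | succ n ih => rw [ascPochhammer_succ_eval, ih, Finset.prod_range_succ]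

/-- for every prime `p ≡ 1 (mod 4)`, with `G` Morita's `p`-adic gamma
function, `h = 1/2` and `q = 1/4` in `ℤ_p`,
`(1/4)_{(p-1)/2} = (p/4) · Γ_p(-1/4 + p/2) / Γ_p(1/4)` in `ℚ_p`. -/
theorem poch_quarter_gammaP_one_mod_four (p : ℕ) [Fact p.Prime] (hp : p % 4 = 1)
    (G : ℤ_[p] → ℤ_[p]) (hGcont : Continuous G)
    (hGnat : ∀ k : ℕ, G (k : ℤ_[p]) =
      (-1)^k * ∏ j ∈ (Finset.Ioo 0 k).filter (fun j => ¬ p ∣ j), (j : ℤ_[p]))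
    (h q : ℤ_[p]) (hh : 2 * h = 1) (hq : 4 * q = 1) :
    ((poch (1/4) ((p-1)/2) : ℚ) : ℚ_[p]) =
      ((p : ℚ_[p]) / 4) * ((G (-q + p * h) : ℚ_[p]) / (G q : ℚ_[p])) := by
  have hprime := (Fact.out : p.Prime)
  obtain ⟨c, hpc⟩ : ∃ c, p = 4*c + 1 := ⟨p/4, by have := Nat.div_add_mod p 4; omega⟩
  have hc1 : 1 ≤ c := by have := hprime.two_le; omega
  have hp5 : 5 ≤ p := by omega
  have hn2c : (p - 1)/2 = 2*c := by omega
  -- divisibility pattern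
  have hnp4 : ¬ (p ∣ 4) := fun hd => by have := Nat.le_of_dvd (by norm_num) hd; omega
  have hdvd_iff : ∀ m i : ℕ, 4 * m ≡ 1 [MOD p] → i < 2*c → (p ∣ m + i ↔ i = c) := by
    intro m i hm hi
    have h4 : p ∣ 4*(m+i) ↔ p ∣ m + i := by
      rw [hprime.dvd_mul]
      simp [hnp4]
    have h2 : (4*m + 4*i) % p = (1 + 4*i) % p := Nat.ModEq.add_right _ hm
    have h3 : p ∣ (4*m + 4*i) ↔ p ∣ (1 + 4*i) := by
      rw [Nat.dvd_iff_mod_eq_zero, Nat.dvd_iff_mod_eq_zero, h2]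
    have h5 : p ∣ 1 + 4*i ↔ i = c := by
      constructor
      · intro hd
        obtain ⟨d, hd'⟩ := hd
        have hlt : 1 + 4*i < 2*p := by omega
        rcases Nat.lt_or_ge d 2 with hd2 | hd2
        · interval_cases d <;> omega
        · have : 2*p ≤ p*d := by calc 2*p = p*2 := by ring
                                     _ ≤ p*d := Nat.mul_le_mul_left p hd2
          omega
      · intro h; exact ⟨1, by omega⟩
    rw [← h4, show 4*(m+i) = 4*m+4*i from by ring, h3, h5]
  -- the finite key identity
  have key : ∀ m : ℕ, 1 ≤ m → 4 * m ≡ 1 [MOD p] →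
      G (((m + 2*c : ℕ)) : ℤ_[p]) =
        G (m : ℤ_[p]) * ∏ i ∈ (range (2*c)).erase c, ((m:ℤ_[p]) + (i:ℤ_[p])) := by
    intro m hm1 hm
    have filter_eq : (Finset.range (2*c)).filter (fun i => ¬ p ∣ (m + i))
        = (Finset.range (2*c)).erase c := by
      ext i
      simp only [mem_filter, mem_erase, mem_range]
      constructor
      · rintro ⟨hi, hnd⟩
        exact ⟨fun he => hnd ((hdvd_iff m i hm hi).mpr he), hi⟩
      · rintro ⟨hne, hi⟩
        exact ⟨hi, fun hd => hne ((hdvd_iff m i hm hi).mp hd)⟩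
    rw [hGnat, hGnat]
    have hsign : ((-1 : ℤ_[p]))^(m + 2*c) = (-1)^m := by
      rw [pow_add, pow_mul]
      norm_num
    rw [hsign, mul_assoc]
    congr 1
    have hioo : ∀ N : ℕ, (Finset.Ioo 0 N) = Finset.Ico 1 N := fun N => (Finset.Ico_add_one_left_eq_Ioo 0 N).symm
    set f : ℕ → ℤ_[p] := fun j => if ¬ p ∣ j then (j : ℤ_[p]) else 1 with hf
    have hpf : ∀ N : ℕ, (∏ j ∈ (Finset.Ioo 0 N).filter (fun j => ¬ p ∣ j), (j : ℤ_[p]))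
        = ∏ j ∈ Finset.Ico 1 N, f j := by
      intro N
      rw [hioo, Finset.prod_filter]
    rw [hpf, hpf]
    rw [← Finset.prod_Ico_consecutive f hm1 (Nat.le_add_right m (2*c))]
    congr 1
    rw [Finset.prod_Ico_eq_prod_range]
    simp only [Nat.add_sub_cancel_left]
    have : ∀ i ∈ Finset.range (2*c),
        f (m + i) = if ¬ p ∣ (m+i) then ((m:ℤ_[p]) + (i:ℤ_[p])) else 1 := by
      intro i _
      simp only [hf]
      split <;> [push_cast; skip] <;> ring
    rw [Finset.prod_congr rfl this, ← Finset.prod_filter, filter_eq]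
  -- approximating sequence
  have hcp : Nat.Coprime 4 p := by
    have := (Nat.Prime.coprime_iff_not_dvd hprime (n := 4)).mpr hnp4
    exact this.symm
  have hcop : ∀ k : ℕ, Nat.Coprime 4 (p^(k+1)) := fun k => hcp.pow_right _
  haveI hNZ : ∀ k : ℕ, NeZero (p^(k+1)) := fun k => ⟨pow_ne_zero _ hprime.ne_zero⟩
  set m : ℕ → ℕ := fun k =>
    (((ZMod.unitOfCoprime 4 (hcop k))⁻¹ : (ZMod (p^(k+1)))ˣ) : ZMod (p^(k+1))).val with hm
  have hmod : ∀ k, 4 * m k ≡ 1 [MOD p^(k+1)] := by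
    intro k
    rw [← ZMod.natCast_eq_natCast_iff]
    push_cast
    rw [ZMod.natCast_val, ZMod.cast_id]
    calc (4 : ZMod (p^(k+1))) * ((ZMod.unitOfCoprime 4 (hcop k))⁻¹ : (ZMod (p^(k+1)))ˣ)
        = ((ZMod.unitOfCoprime 4 (hcop k) * (ZMod.unitOfCoprime 4 (hcop k))⁻¹ :
            (ZMod (p^(k+1)))ˣ) : ZMod (p^(k+1))) := by
          rw [Units.val_mul]; norm_num
      _ = 1 := by rw [mul_inv_cancel]; rfl
  have hmodp : ∀ k, 4 * m k ≡ 1 [MOD p] :=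
    fun k => (hmod k).of_dvd (dvd_pow_self p (Nat.succ_ne_zero k))
  have hm1 : ∀ k, 1 ≤ m k := by
    intro k
    by_contra hk
    have h0 : m k = 0 := by omega
    have := hmod k
    rw [h0, Nat.ModEq] at this
    have hgt : 1 < p^(k+1) := Nat.one_lt_pow (Nat.succ_ne_zero k) hprime.one_lt
    simp [Nat.mod_eq_of_lt hgt] at this
  have htend : Filter.Tendsto (fun k => ((m k : ℕ) : ℤ_[p])) atTop (nhds q) := by
    rw [tendsto_iff_norm_sub_tendsto_zero]
    apply squeeze_zero (fun k => norm_nonneg _) (g := fun k => ((p:ℝ))⁻¹ ^ (k+1))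
    · intro k
      have hdvd : ((p:ℤ)^(k+1)) ∣ ((4 * m k : ℕ) : ℤ) - 1 := by
        have h2 := dvd_sub_comm.mp (hmod k).dvd
        push_cast at h2 ⊢
        exact h2
      have hnorm : ‖(((4 * m k : ℕ) : ℤ_[p]) - 1)‖ ≤ (p:ℝ) ^ (-(k+1) : ℤ) := by
        have : (((4 * m k : ℕ) : ℤ_[p]) - 1) = (((4 * m k : ℤ) - 1 : ℤ) : ℤ_[p]) := by
          push_cast; ring
        rw [this]
        exact PadicInt.norm_int_le_pow_iff_dvd.mpr (by push_cast at hdvd ⊢; exact hdvd)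
      have heq : ((m k : ℕ) : ℤ_[p]) - q = q * (((4 * m k : ℕ) : ℤ_[p]) - 1) := by
        push_cast
        linear_combination ((m k : ℤ_[p]) - q) * hq.symm - q * hq
      rw [heq]
      calc ‖q * (((4 * m k : ℕ) : ℤ_[p]) - 1)‖ ≤ ‖(((4 * m k : ℕ) : ℤ_[p]) - 1)‖ := by
            rw [norm_mul]
            exact mul_le_of_le_one_left (norm_nonneg _) (PadicInt.norm_le_one q)
        _ ≤ (p:ℝ) ^ (-(k+1) : ℤ) := hnorm
        _ = ((p:ℝ))⁻¹ ^ (k+1) := by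
            rw [zpow_neg, inv_pow, ← zpow_natCast (p:ℝ) (k+1)]
            norm_num
    · have h1 : (p:ℝ)⁻¹ < 1 := by
        rw [inv_lt_one_iff₀]
        right; exact_mod_cast by omega
      have h0 : (0:ℝ) ≤ (p:ℝ)⁻¹ := by positivity
      exact (tendsto_pow_atTop_nhds_zero_of_lt_one h0 h1).comp (tendsto_add_atTop_nat 1)
  -- pass to the limit
  have hGq_eq : G (q + ((2*c:ℕ):ℤ_[p]))
      = G q * ∏ i ∈ (range (2*c)).erase c, (q + (i:ℤ_[p])) := by
    have t1 : Tendsto (fun k => G (((m k + 2*c : ℕ)) : ℤ_[p])) atTop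
        (nhds (G (q + ((2*c:ℕ):ℤ_[p])))) := by
      have ht : Tendsto (fun k => ((m k : ℕ):ℤ_[p]) + ((2*c:ℕ):ℤ_[p])) atTop
          (nhds (q + ((2*c:ℕ):ℤ_[p]))) := htend.add_const _
      refine ((hGcont.tendsto _).comp ht).congr (fun k => ?_)
      simp only [Function.comp_apply]
      congr 1
      push_cast
      ring
    have t2 : Tendsto (fun k => G ((m k:ℕ):ℤ_[p]) *
        ∏ i ∈ (range (2*c)).erase c, (((m k:ℕ):ℤ_[p]) + (i:ℤ_[p]))) atTop
        (nhds (G q * ∏ i ∈ (range (2*c)).erase c, (q + (i:ℤ_[p])))) :=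
      ((hGcont.tendsto q).comp htend).mul
        (tendsto_finset_prod _ (fun i _ => htend.add_const _))
    exact tendsto_nhds_unique ((t1.congr (fun k => key (m k) (hm1 k) (hmodp k)))) t2
  -- norm of G q
  have hGnorm : ∀ j : ℕ, ‖G (j:ℤ_[p])‖ = 1 := by
    intro j
    rw [hGnat, norm_mul]
    have hs : ‖((-1 : ℤ_[p]))^j‖ = 1 := by
      rcases neg_one_pow_eq_or ℤ_[p] j with h' | h' <;> rw [h'] <;> simp
    rw [hs, one_mul]
    refine Finset.prod_induction _ (fun z => ‖z‖ = 1)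
      (fun a b ha hb => by show ‖a*b‖ = 1; rw [norm_mul]; rw [ha, hb, one_mul]) norm_one ?_
    intro x hx
    simp only [mem_filter, mem_Ioo] at hx
    have hnd : ¬ ((p:ℤ) ∣ (x:ℤ)) := by exact_mod_cast hx.2
    have hlt := (PadicInt.norm_int_lt_one_iff_dvd (x:ℤ)).not.mpr hnd
    have hle : ‖((x:ℤ):ℤ_[p])‖ ≤ 1 := PadicInt.norm_le_one _
    have : ‖((x:ℤ):ℤ_[p])‖ = 1 := le_antisymm hle (not_lt.mp hlt)
    simpa using this
  have hGq_norm : ‖G q‖ = 1 := by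
    have t1 : Tendsto (fun k => ‖G ((m k:ℕ):ℤ_[p])‖) atTop (nhds ‖G q‖) :=
      (continuous_norm.tendsto _).comp ((hGcont.tendsto q).comp htend)
    have t2 : Tendsto (fun k => ‖G ((m k:ℕ):ℤ_[p])‖) atTop (nhds 1) := by
      refine tendsto_const_nhds.congr (fun k => ?_)
      rw [hGnorm]
    exact tendsto_nhds_unique t1 t2
  have hGqne : G q ≠ 0 := fun h0 => by simp [h0] at hGq_norm
  -- rewrite the argument of G
  have harg : -q + (p:ℤ_[p]) * h = q + ((2*c:ℕ):ℤ_[p]) := by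
    have hp' : ((p:ℕ) : ℤ_[p]) = 4*(c:ℤ_[p]) + 1 := by
      have := congrArg (fun n : ℕ => (n : ℤ_[p])) hpc
      push_cast at this
      exact this
    have h4ne : (4:ℤ_[p]) ≠ 0 := by
      have h4 : ((4:ℕ):ℤ_[p]) ≠ 0 := Nat.cast_ne_zero.mpr (by norm_num)
      exact_mod_cast h4
    apply mul_left_cancel₀ h4ne
    push_cast
    rw [hp']
    linear_combination (8*(c:ℤ_[p])+2)*hh + (-2)*hq
  rw [hn2c, harg, hGq_eq]
  -- cast the product to ℚ_p
  have coe_prod : ((∏ i ∈ (range (2*c)).erase c, (q + (i:ℤ_[p])) : ℤ_[p]) : ℚ_[p])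
      = ∏ i ∈ (range (2*c)).erase c, ((q:ℚ_[p]) + (i:ℚ_[p])) := by
    have hmp := map_prod (PadicInt.Coe.ringHom (p := p)) (fun i : ℕ => q + (i:ℤ_[p]))
      ((range (2*c)).erase c)
    have h1 : ((∏ i ∈ (range (2*c)).erase c, (q + (i:ℤ_[p])) : ℤ_[p]) : ℚ_[p])
        = ∏ i ∈ (range (2*c)).erase c, ((q + (i:ℤ_[p]) : ℤ_[p]) : ℚ_[p]) := hmp
    rw [h1]
    refine Finset.prod_congr rfl (fun i _ => ?_)
    push_cast
    ring
  have hGmul : ((G q * ∏ i ∈ (range (2*c)).erase c, (q + (i:ℤ_[p])) : ℤ_[p]) : ℚ_[p])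
      = (G q : ℚ_[p]) * ∏ i ∈ (range (2*c)).erase c, ((q:ℚ_[p]) + (i:ℚ_[p])) := by
    rw [← coe_prod]
    push_cast
    ring
  rw [hGmul]
  have hGqne' : (G q : ℚ_[p]) ≠ 0 := PadicInt.coe_ne_zero.mpr hGqne
  rw [mul_div_cancel_left₀ _ hGqne']
  -- compute the left-hand side
  have hq4 : ((q : ℚ_[p])) = 1/4 := by
    have h1 : (4:ℚ_[p]) * (q:ℚ_[p]) = 1 := by
      have := congrArg (fun z : ℤ_[p] => (z : ℚ_[p])) hq
      push_cast at this
      exact this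
    rw [eq_div_iff (by norm_num : (4:ℚ_[p]) ≠ 0)]
    linear_combination h1
  have hc_mem : c ∈ Finset.range (2*c) := mem_range.mpr (by omega)
  have hqc : (q:ℚ_[p]) + (c:ℚ_[p]) = (p:ℚ_[p])/4 := by
    have hp' : ((p:ℕ) : ℚ_[p]) = 4*(c:ℚ_[p]) + 1 := by
      have := congrArg (fun n : ℕ => (n : ℚ_[p])) hpc
      push_cast at this
      exact this
    rw [hq4, hp', div_add' _ _ _ (by norm_num : (4:ℚ_[p]) ≠ 0)]
    ring_nf
  rw [poch, ascPoch_prod]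
  push_cast
  rw [show ((1:ℚ_[p])/4) = (q:ℚ_[p]) from hq4.symm]
  rw [← Finset.mul_prod_erase _ _ hc_mem, hqc]
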